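/- Let Exp(1) denote the exponential distribution on (0,∞) with density exp(−x). For every probability measure P on (0,∞) with finite second moment, mean ∫ x dP = 1 and variance v := Var(P) ≤ 1, one has D(P‖Exp(1)) ≥ (v − 1)²/8. -/

import Mathlib

open MeasureTheory ProbabilityTheory Real
open Set
open scoped ENNReal

set_option linter.unusedVariables false

lemma sum6_le_exp {t : ℝ} (ht : 0 ≤ t) :
    1 + t + t^2/2 + t^3/6 + t^4/24 + t^5/120 + t^6/720 ≤ exp t := by
  have h := Real.sum_le_exp_of_nonneg ht 7
  have he : ∑ i ∈ Finset.range 7, t ^ i / (Nat.factorial i) =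
      1 + t + t^2/2 + t^3/6 + t^4/24 + t^5/120 + t^6/720 := by
    simp [Finset.sum_range_succ, Nat.factorial]
  linarith [he ▸ h]

lemma exp_neg_le_quad {t : ℝ} (ht : 0 ≤ t) : exp (-t) ≤ 1 - t + t^2/2 := by
  have hb : 1 + t + t^2/2 + t^3/6 ≤ exp t := by
    have h4 : 0 ≤ t^4 := pow_nonneg ht 4
    have h5 : 0 ≤ t^5 := pow_nonneg ht 5
    have h6 : 0 ≤ t^6 := pow_nonneg ht 6
    linarith [sum6_le_exp ht]
  have hbpos : (0:ℝ) < 1 + t + t^2/2 + t^3/6 := by nlinarith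
  have hq : (0:ℝ) < 1 - t + t^2/2 := by nlinarith [sq_nonneg (t-1)]
  have key : 1 ≤ (1 - t + t^2/2) * (1 + t + t^2/2 + t^3/6) := by
    nlinarith [pow_nonneg ht 3, pow_nonneg ht 4, pow_nonneg ht 5]
  rw [Real.exp_neg]
  calc (exp t)⁻¹ ≤ (1 + t + t^2/2 + t^3/6)⁻¹ := by
        exact inv_anti₀ hbpos hb
    _ ≤ 1 - t + t^2/2 := by
        rw [inv_le_iff_one_le_mul₀' hbpos]
        linarith [key]

lemma exp_le_quad {u : ℝ} (hu : u ≤ 0) : exp u ≤ 1 + u + u^2/2 := by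
  have := exp_neg_le_quad (t := -u) (by linarith)
  simp only [neg_neg] at this
  calc exp u ≤ 1 - (-u) + (-u)^2/2 := this
    _ = 1 + u + u^2/2 := by ring

lemma exp_neg_le_six {t : ℝ} (ht : 0 ≤ t) :
    exp (-t) ≤ 1 - t + t^2/2 - t^3/6 + t^4/24 - t^5/120 + t^6/720 := by
  have hb := sum6_le_exp ht
  have hbpos : (0:ℝ) < 1 + t + t^2/2 + t^3/6 + t^4/24 + t^5/120 + t^6/720 := by positivity
  have hq : (0:ℝ) ≤ 1 - t + t^2/2 - t^3/6 + t^4/24 - t^5/120 + t^6/720 := by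
    nlinarith [sq_nonneg (t^3 - 3*t^2), sq_nonneg (t^2-2*t), sq_nonneg (t-1), sq_nonneg t,
      sq_nonneg (t^2 - 3*t), sq_nonneg (t^3 - 3*t^2 + 3*t), sq_nonneg (t^3-4*t^2)]
  have key : 1 ≤ (1 - t + t^2/2 - t^3/6 + t^4/24 - t^5/120 + t^6/720) *
      (1 + t + t^2/2 + t^3/6 + t^4/24 + t^5/120 + t^6/720) := by
    nlinarith [pow_nonneg ht 8, pow_nonneg ht 10, pow_nonneg ht 12]
  rw [Real.exp_neg]
  calc (exp t)⁻¹ ≤ (1 + t + t^2/2 + t^3/6 + t^4/24 + t^5/120 + t^6/720)⁻¹ :=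
        inv_anti₀ hbpos hb
    _ ≤ _ := by
        rw [inv_le_iff_one_le_mul₀' hbpos]
        linarith [key]

lemma exp_le_P5K {u : ℝ} (hu : u ≤ 1/2) :
    exp u ≤ 1 + u + u^2/2 + u^3/6 + u^4/24 + u^5/120 + (7/4320)*u^6 := by
  rcases le_or_gt u 0 with h | h
  · have := exp_neg_le_six (t := -u) (by linarith)
    simp only [neg_neg] at this
    have h6 : 0 ≤ u^6 := by positivity
    nlinarith [this]
  · have h6 := Real.exp_bound' h.le (by linarith) (n := 6) (by norm_num)
    have he : ∑ i ∈ Finset.range 6, u ^ i / (Nat.factorial i) =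
        1 + u + u^2/2 + u^3/6 + u^4/24 + u^5/120 := by
      simp [Finset.sum_range_succ, Nat.factorial]
    rw [he] at h6
    norm_num [Nat.factorial] at h6
    nlinarith [h6]

lemma exp_six_gt : (403.42879335 : ℝ) < exp 6 := by
  have h := Real.exp_one_gt_d9
  have h6 : exp 6 = (exp 1)^6 := by rw [← Real.exp_nat_mul]; norm_num
  have : (2.7182818283:ℝ)^6 ≤ (exp 1)^6 := pow_le_pow_left₀ (by norm_num) h.le 6
  rw [h6]; nlinarith [this]

lemma exp_six_lt : exp 6 < (403.42879362 : ℝ) := by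
  have h := Real.exp_one_lt_d9
  have h6 : exp 6 = (exp 1)^6 := by rw [← Real.exp_nat_mul]; norm_num
  have : (exp 1)^6 ≤ (2.7182818286:ℝ)^6 := pow_le_pow_left₀ (exp_pos 1).le h.le 6
  rw [h6]; nlinarith [this]

lemma exp_neg_six_lt : exp (-6) < 0.0024787522 := by
  have h := exp_six_gt
  rw [Real.exp_neg, inv_eq_one_div, div_lt_iff₀ (exp_pos 6)]
  nlinarith

lemma exp_neg_six_gt : (0.0024787521:ℝ) < exp (-6) := by
  have h := exp_six_lt
  rw [Real.exp_neg, inv_eq_one_div, lt_div_iff₀ (exp_pos 6)]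
  nlinarith

lemma expMeasure_eq : expMeasure 1 =
    volume.withDensity (fun x => ((exponentialPDFReal 1 x).toNNReal : ℝ≥0∞)) := rfl

lemma pdfReal_eq (x : ℝ) : exponentialPDFReal 1 x = if 0 ≤ x then exp (-x) else 0 := by
  unfold exponentialPDFReal gammaPDFReal
  simp only [rpow_one, Real.Gamma_one, div_one, sub_self, Real.rpow_zero, mul_one]
  split_ifs <;> ring_nf

lemma pdf_indicator (g : ℝ → ℝ) (x : ℝ) : ((exponentialPDFReal 1 x).toNNReal) • g x
    = (Ici (0:ℝ)).indicator (fun x => g x * exp (-x)) x := by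
  rw [NNReal.smul_def, Real.coe_toNNReal _ (exponentialPDFReal_nonneg one_pos x), pdfReal_eq]
  simp only [indicator, mem_Ici, smul_eq_mul]
  split_ifs <;> ring

lemma integral_expMeasure (g : ℝ → ℝ) :
    ∫ x, g x ∂(expMeasure 1) = ∫ x in Ioi 0, g x * exp (-x) := by
  rw [expMeasure_eq, integral_withDensity_eq_integral_smul
    ((measurable_exponentialPDFReal 1).real_toNNReal) g]
  simp_rw [pdf_indicator g]
  rw [integral_indicator measurableSet_Ici, integral_Ici_eq_integral_Ioi]

lemma integrable_expMeasure_iff (g : ℝ → ℝ) :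
    Integrable g (expMeasure 1) ↔ IntegrableOn (fun x => g x * exp (-x)) (Ioi 0) := by
  rw [expMeasure_eq, integrable_withDensity_iff_integrable_smul
    ((measurable_exponentialPDFReal 1).real_toNNReal)]
  have : (fun x => ((exponentialPDFReal 1 x).toNNReal) • g x)
      = (Ici (0:ℝ)).indicator (fun x => g x * exp (-x)) := by
    funext x; exact pdf_indicator g x
  rw [this, integrable_indicator_iff measurableSet_Ici, IntegrableOn,
    ← integrableOn_Ici_iff_integrableOn_Ioi]
  rfl

lemma moment_exp (k : ℕ) :
    ∫ x in Ioi (0:ℝ), x^k * exp (-x) = Nat.factorial k := by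
  have h := Real.Gamma_eq_integral (s := ((k:ℝ)+1)) (by positivity)
  have h2 : ∀ x ∈ Ioi (0:ℝ), exp (-x) * x ^ ((k:ℝ)+1-1) = x^k * exp (-x) := by
    intro x hx
    rw [show ((k:ℝ)+1-1) = (k:ℝ) by ring, Real.rpow_natCast]
    ring
  rw [setIntegral_congr_fun measurableSet_Ioi h2] at h
  rw [← h]
  exact_mod_cast Real.Gamma_nat_eq_factorial k

lemma integrableOn_moment (k : ℕ) :
    IntegrableOn (fun x => x^k * exp (-x)) (Ioi (0:ℝ)) := by
  have h := Real.GammaIntegral_convergent (s := ((k:ℝ)+1)) (by positivity)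
  apply h.congr_fun _ measurableSet_Ioi
  intro x hx
  simp only
  rw [show ((k:ℝ)+1-1) = (k:ℝ) by ring, Real.rpow_natCast]
  ring

lemma intA3 : ∫ x in (0:ℝ)..6, (-x^2+4*x-2)^3 * Real.exp (-x)
    = (-80:ℝ) + (30320:ℝ) * Real.exp (-6) := by
  have hder : ∀ x ∈ Set.uIcc (0:ℝ) 6, HasDerivAt
      (fun x : ℝ => ((80:ℝ) + (72:ℝ) * x^1 + (60:ℝ) * x^2 + (-16:ℝ) * x^3 + (24:ℝ) * x^4 + (-6:ℝ) * x^5 + (1:ℝ) * x^6) * Real.exp (-x))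
      ((-x^2+4*x-2)^3 * Real.exp (-x)) x := by
    intro x _
    have hexp : HasDerivAt (fun x : ℝ => Real.exp (-x)) (-Real.exp (-x)) x := by
      simpa using (hasDerivAt_neg x).exp
    have hP : HasDerivAt (fun x : ℝ => ((80:ℝ) + (72:ℝ) * x^1 + (60:ℝ) * x^2 + (-16:ℝ) * x^3 + (24:ℝ) * x^4 + (-6:ℝ) * x^5 + (1:ℝ) * x^6)) ((0:ℝ) + (72:ℝ) * ((1:ℕ) * x^(1-1)) + (60:ℝ) * ((2:ℕ) * x^(2-1)) + (-16:ℝ) * ((3:ℕ) * x^(3-1)) + (24:ℝ) * ((4:ℕ) * x^(4-1)) + (-6:ℝ) * ((5:ℕ) * x^(5-1)) + (1:ℝ) * ((6:ℕ) * x^(6-1))) x :=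
      (((((((hasDerivAt_const x (80:ℝ)).add ((hasDerivAt_pow 1 x).const_mul (72:ℝ))).add ((hasDerivAt_pow 2 x).const_mul (60:ℝ))).add ((hasDerivAt_pow 3 x).const_mul (-16:ℝ))).add ((hasDerivAt_pow 4 x).const_mul (24:ℝ))).add ((hasDerivAt_pow 5 x).const_mul (-6:ℝ))).add ((hasDerivAt_pow 6 x).const_mul (1:ℝ)))
    have := hP.mul hexp
    refine this.congr_deriv ?_
    push_cast
    ring
  have hcont : IntervalIntegrable (fun x : ℝ => (-x^2+4*x-2)^3 * Real.exp (-x)) MeasureTheory.volume 0 6 := by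
    apply Continuous.intervalIntegrable
    fun_prop
  rw [intervalIntegral.integral_eq_sub_of_hasDerivAt hder hcont]
  norm_num
  ring

lemma intA4 : ∫ x in (0:ℝ)..6, (-x^2+4*x-2)^4 * Real.exp (-x)
    = (4752:ℝ) + (-1893648:ℝ) * Real.exp (-6) := by
  have hder : ∀ x ∈ Set.uIcc (0:ℝ) 6, HasDerivAt
      (fun x : ℝ => ((-4752:ℝ) + (-4736:ℝ) * x^1 + (-2432:ℝ) * x^2 + (-672:ℝ) * x^3 + (-344:ℝ) * x^4 + (64:ℝ) * x^5 + (-48:ℝ) * x^6 + (8:ℝ) * x^7 + (-1:ℝ) * x^8) * Real.exp (-x))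
      ((-x^2+4*x-2)^4 * Real.exp (-x)) x := by
    intro x _
    have hexp : HasDerivAt (fun x : ℝ => Real.exp (-x)) (-Real.exp (-x)) x := by
      simpa using (hasDerivAt_neg x).exp
    have hP : HasDerivAt (fun x : ℝ => ((-4752:ℝ) + (-4736:ℝ) * x^1 + (-2432:ℝ) * x^2 + (-672:ℝ) * x^3 + (-344:ℝ) * x^4 + (64:ℝ) * x^5 + (-48:ℝ) * x^6 + (8:ℝ) * x^7 + (-1:ℝ) * x^8)) ((0:ℝ) + (-4736:ℝ) * ((1:ℕ) * x^(1-1)) + (-2432:ℝ) * ((2:ℕ) * x^(2-1)) + (-672:ℝ) * ((3:ℕ) * x^(3-1)) + (-344:ℝ) * ((4:ℕ) * x^(4-1)) + (64:ℝ) * ((5:ℕ) * x^(5-1)) + (-48:ℝ) * ((6:ℕ) * x^(6-1)) + (8:ℝ) * ((7:ℕ) * x^(7-1)) + (-1:ℝ) * ((8:ℕ) * x^(8-1))) x :=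
      (((((((((hasDerivAt_const x (-4752:ℝ)).add ((hasDerivAt_pow 1 x).const_mul (-4736:ℝ))).add ((hasDerivAt_pow 2 x).const_mul (-2432:ℝ))).add ((hasDerivAt_pow 3 x).const_mul (-672:ℝ))).add ((hasDerivAt_pow 4 x).const_mul (-344:ℝ))).add ((hasDerivAt_pow 5 x).const_mul (64:ℝ))).add ((hasDerivAt_pow 6 x).const_mul (-48:ℝ))).add ((hasDerivAt_pow 7 x).const_mul (8:ℝ))).add ((hasDerivAt_pow 8 x).const_mul (-1:ℝ)))
    have := hP.mul hexp
    refine this.congr_deriv ?_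
    push_cast
    ring
  have hcont : IntervalIntegrable (fun x : ℝ => (-x^2+4*x-2)^4 * Real.exp (-x)) MeasureTheory.volume 0 6 := by
    apply Continuous.intervalIntegrable
    fun_prop
  rw [intervalIntegral.integral_eq_sub_of_hasDerivAt hder hcont]
  norm_num
  ring

lemma intA5 : ∫ x in (0:ℝ)..6, (-x^2+4*x-2)^5 * Real.exp (-x)
    = (-440192:ℝ) + (177353984:ℝ) * Real.exp (-6) := by
  have hder : ∀ x ∈ Set.uIcc (0:ℝ) 6, HasDerivAt
      (fun x : ℝ => ((440192:ℝ) + (440160:ℝ) * x^1 + (220240:ℝ) * x^2 + (72960:ℝ) * x^3 + (19040:ℝ) * x^4 + (2896:ℝ) * x^5 + (1160:ℝ) * x^6 + (-160:ℝ) * x^7 + (80:ℝ) * x^8 + (-10:ℝ) * x^9 + (1:ℝ) * x^10) * Real.exp (-x))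
      ((-x^2+4*x-2)^5 * Real.exp (-x)) x := by
    intro x _
    have hexp : HasDerivAt (fun x : ℝ => Real.exp (-x)) (-Real.exp (-x)) x := by
      simpa using (hasDerivAt_neg x).exp
    have hP : HasDerivAt (fun x : ℝ => ((440192:ℝ) + (440160:ℝ) * x^1 + (220240:ℝ) * x^2 + (72960:ℝ) * x^3 + (19040:ℝ) * x^4 + (2896:ℝ) * x^5 + (1160:ℝ) * x^6 + (-160:ℝ) * x^7 + (80:ℝ) * x^8 + (-10:ℝ) * x^9 + (1:ℝ) * x^10)) ((0:ℝ) + (440160:ℝ) * ((1:ℕ) * x^(1-1)) + (220240:ℝ) * ((2:ℕ) * x^(2-1)) + (72960:ℝ) * ((3:ℕ) * x^(3-1)) + (19040:ℝ) * ((4:ℕ) * x^(4-1)) + (2896:ℝ) * ((5:ℕ) * x^(5-1)) + (1160:ℝ) * ((6:ℕ) * x^(6-1)) + (-160:ℝ) * ((7:ℕ) * x^(7-1)) + (80:ℝ) * ((8:ℕ) * x^(8-1)) + (-10:ℝ) * ((9:ℕ) * x^(9-1)) + (1:ℝ) * ((10:ℕ) * x^(10-1))) x :=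
      (((((((((((hasDerivAt_const x (440192:ℝ)).add ((hasDerivAt_pow 1 x).const_mul (440160:ℝ))).add ((hasDerivAt_pow 2 x).const_mul (220240:ℝ))).add ((hasDerivAt_pow 3 x).const_mul (72960:ℝ))).add ((hasDerivAt_pow 4 x).const_mul (19040:ℝ))).add ((hasDerivAt_pow 5 x).const_mul (2896:ℝ))).add ((hasDerivAt_pow 6 x).const_mul (1160:ℝ))).add ((hasDerivAt_pow 7 x).const_mul (-160:ℝ))).add ((hasDerivAt_pow 8 x).const_mul (80:ℝ))).add ((hasDerivAt_pow 9 x).const_mul (-10:ℝ))).add ((hasDerivAt_pow 10 x).const_mul (1:ℝ)))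
    have := hP.mul hexp
    refine this.congr_deriv ?_
    push_cast
    ring
  have hcont : IntervalIntegrable (fun x : ℝ => (-x^2+4*x-2)^5 * Real.exp (-x)) MeasureTheory.volume 0 6 := by
    apply Continuous.intervalIntegrable
    fun_prop
  rw [intervalIntegral.integral_eq_sub_of_hasDerivAt hder hcont]
  norm_num
  ring

lemma intA6 : ∫ x in (0:ℝ)..6, (-x^2+4*x-2)^6 * Real.exp (-x)
    = (59245120:ℝ) + (-23898546496:ℝ) * Real.exp (-6) := by
  have hder : ∀ x ∈ Set.uIcc (0:ℝ) 6, HasDerivAt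
      (fun x : ℝ => ((-59245120:ℝ) + (-59245056:ℝ) * x^1 + (-29622912:ℝ) * x^2 + (-9872960:ℝ) * x^3 + (-2471280:ℝ) * x^4 + (-489600:ℝ) * x^5 + (-86528:ℝ) * x^6 + (-8736:ℝ) * x^7 + (-2940:ℝ) * x^8 + (320:ℝ) * x^9 + (-120:ℝ) * x^10 + (12:ℝ) * x^11 + (-1:ℝ) * x^12) * Real.exp (-x))
      ((-x^2+4*x-2)^6 * Real.exp (-x)) x := by
    intro x _
    have hexp : HasDerivAt (fun x : ℝ => Real.exp (-x)) (-Real.exp (-x)) x := by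
      simpa using (hasDerivAt_neg x).exp
    have hP : HasDerivAt (fun x : ℝ => ((-59245120:ℝ) + (-59245056:ℝ) * x^1 + (-29622912:ℝ) * x^2 + (-9872960:ℝ) * x^3 + (-2471280:ℝ) * x^4 + (-489600:ℝ) * x^5 + (-86528:ℝ) * x^6 + (-8736:ℝ) * x^7 + (-2940:ℝ) * x^8 + (320:ℝ) * x^9 + (-120:ℝ) * x^10 + (12:ℝ) * x^11 + (-1:ℝ) * x^12)) ((0:ℝ) + (-59245056:ℝ) * ((1:ℕ) * x^(1-1)) + (-29622912:ℝ) * ((2:ℕ) * x^(2-1)) + (-9872960:ℝ) * ((3:ℕ) * x^(3-1)) + (-2471280:ℝ) * ((4:ℕ) * x^(4-1)) + (-489600:ℝ) * ((5:ℕ) * x^(5-1)) + (-86528:ℝ) * ((6:ℕ) * x^(6-1)) + (-8736:ℝ) * ((7:ℕ) * x^(7-1)) + (-2940:ℝ) * ((8:ℕ) * x^(8-1)) + (320:ℝ) * ((9:ℕ) * x^(9-1)) + (-120:ℝ) * ((10:ℕ) * x^(10-1)) + (12:ℝ) * ((11:ℕ) * x^(11-1)) + (-1:ℝ) * ((12:ℕ)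 * x^(12-1))) x :=
      (((((((((((((hasDerivAt_const x (-59245120:ℝ)).add ((hasDerivAt_pow 1 x).const_mul (-59245056:ℝ))).add ((hasDerivAt_pow 2 x).const_mul (-29622912:ℝ))).add ((hasDerivAt_pow 3 x).const_mul (-9872960:ℝ))).add ((hasDerivAt_pow 4 x).const_mul (-2471280:ℝ))).add ((hasDerivAt_pow 5 x).const_mul (-489600:ℝ))).add ((hasDerivAt_pow 6 x).const_mul (-86528:ℝ))).add ((hasDerivAt_pow 7 x).const_mul (-8736:ℝ))).add ((hasDerivAt_pow 8 x).const_mul (-2940:ℝ))).add ((hasDerivAt_pow 9 x).const_mul (320:ℝ))).add ((hasDerivAt_pow 10 x).const_mul (-120:ℝ))).add ((hasDerivAt_pow 11 x).const_mul (12:ℝ))).add ((hasDerivAt_pow 12 x).const_mul (-1:ℝ)))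
    have := hP.mul hexp
    refine this.congr_deriv ?_
    push_cast
    ring
  have hcont : IntervalIntegrable (fun x : ℝ => (-x^2+4*x-2)^6 * Real.exp (-x)) MeasureTheory.volume 0 6 := by
    apply Continuous.intervalIntegrable
    fun_prop
  rw [intervalIntegral.integral_eq_sub_of_hasDerivAt hder hcont]
  norm_num
  ring

lemma DV {P Q : Measure ℝ} [IsProbabilityMeasure P] [IsProbabilityMeasure Q]
    (hac : P ≪ Q) (hInt : Integrable (fun x => Real.log (P.rnDeriv Q x).toReal) P)
    {g : ℝ → ℝ} (hgm : Measurable g) (hgP : Integrable g P)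
    (hge : Integrable (fun x => exp (g x)) Q) :
    ∫ x, g x ∂P - Real.log (∫ x, exp (g x) ∂Q) ≤
      ∫ x, Real.log (P.rnDeriv Q x).toReal ∂P := by
  set Z : ℝ := ∫ x, exp (g x) ∂Q with hZ
  have hZpos : 0 < Z := integral_exp_pos hge
  set k : ℝ → ℝ := fun x => exp (g x) / (Z * (P.rnDeriv Q x).toReal) with hk
  have hkm : Measurable k :=
    (measurable_exp.comp hgm).div
      ((measurable_const.mul (Measure.measurable_rnDeriv P Q).ennreal_toReal))
  have hknn : ∀ x, 0 ≤ k x := by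
    intro x
    apply div_nonneg (exp_nonneg _)
    exact mul_nonneg hZpos.le ENNReal.toReal_nonneg
  have hpos : ∀ᵐ x ∂P, 0 < P.rnDeriv Q x := Measure.rnDeriv_pos hac
  have hfin : ∀ᵐ x ∂P, P.rnDeriv Q x < ∞ := hac.ae_le (Measure.rnDeriv_lt_top P Q)
  -- lintegral bound
  have hlin : ∫⁻ x, ENNReal.ofReal (k x) ∂P ≤ 1 := by
    rw [← MeasureTheory.lintegral_rnDeriv_mul hac
      (hkm.ennreal_ofReal).aemeasurable]
    have hQfin : ∀ᵐ x ∂Q, P.rnDeriv Q x < ∞ := Measure.rnDeriv_lt_top P Q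
    have hbound : ∀ᵐ x ∂Q, P.rnDeriv Q x * ENNReal.ofReal (k x)
        ≤ ENNReal.ofReal (exp (g x) * (1/Z)) := by
      filter_upwards [hQfin] with x hx
      rcases eq_or_ne (P.rnDeriv Q x) 0 with h0 | h0
      · simp [h0]
      · have hrpos : 0 < (P.rnDeriv Q x).toReal := ENNReal.toReal_pos h0 hx.ne
        nth_rewrite 1 [show P.rnDeriv Q x = ENNReal.ofReal ((P.rnDeriv Q x).toReal) from
          (ENNReal.ofReal_toReal hx.ne).symm]
        rw [← ENNReal.ofReal_mul ENNReal.toReal_nonneg]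
        apply ENNReal.ofReal_le_ofReal
        rw [hk]
        simp only
        apply le_of_eq
        field_simp
    calc ∫⁻ x, P.rnDeriv Q x * ENNReal.ofReal (k x) ∂Q
        ≤ ∫⁻ x, ENNReal.ofReal (exp (g x) * (1/Z)) ∂Q := lintegral_mono_ae hbound
      _ = ∫⁻ x, ENNReal.ofReal (exp (g x)) * ENNReal.ofReal (1/Z) ∂Q := by
          simp_rw [ENNReal.ofReal_mul (exp_nonneg _)]
      _ = (∫⁻ x, ENNReal.ofReal (exp (g x)) ∂Q) * ENNReal.ofReal (1/Z) := by
          rw [lintegral_mul_const' _ _ (by simp)]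
      _ = ENNReal.ofReal Z * ENNReal.ofReal (1/Z) := by
          rw [← ofReal_integral_eq_lintegral_ofReal hge
            (Filter.Eventually.of_forall fun x => exp_nonneg _)]
      _ = 1 := by
          rw [← ENNReal.ofReal_mul hZpos.le]
          rw [mul_one_div, div_self hZpos.ne']
          simp
  -- k is integrable with integral ≤ 1
  have hk_int : Integrable k P := by
    refine ⟨hkm.aestronglyMeasurable, ?_⟩
    rw [hasFiniteIntegral_iff_norm]
    have : ∀ x, ENNReal.ofReal ‖k x‖ = ENNReal.ofReal (k x) := by
      intro x; rw [Real.norm_eq_abs, abs_of_nonneg (hknn x)]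
    simp_rw [this]
    exact lt_of_le_of_lt hlin ENNReal.one_lt_top
  have hk_val : ∫ x, k x ∂P ≤ 1 := by
    rw [integral_eq_lintegral_of_nonneg_ae (Filter.Eventually.of_forall hknn)
      hkm.aestronglyMeasurable]
    calc (∫⁻ x, ENNReal.ofReal (k x) ∂P).toReal ≤ (1 : ℝ≥0∞).toReal :=
          ENNReal.toReal_mono (by simp) hlin
      _ = 1 := by simp
  -- log k equality a.e.
  have hlogk : ∀ᵐ x ∂P, Real.log (k x)
      = g x - Real.log Z - Real.log (P.rnDeriv Q x).toReal := by
    filter_upwards [hpos, hfin] with x hx1 hx2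
    have hrpos : 0 < (P.rnDeriv Q x).toReal := ENNReal.toReal_pos hx1.ne' hx2.ne
    rw [hk]
    simp only
    rw [Real.log_div (exp_ne_zero _) (by positivity), Real.log_exp,
      Real.log_mul hZpos.ne' hrpos.ne']
    ring
  have hkpos : ∀ᵐ x ∂P, 0 < k x := by
    filter_upwards [hpos, hfin] with x hx1 hx2
    have hrpos : 0 < (P.rnDeriv Q x).toReal := ENNReal.toReal_pos hx1.ne' hx2.ne
    rw [hk]; simp only
    positivity
  -- ∫ log k ≤ 0
  have hlog_int : Integrable (fun x => Real.log (k x)) P := by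
    exact ((hgP.sub (integrable_const _)).sub hInt).congr
      (hlogk.mono fun x hx => hx.symm)
  have hmain : ∫ x, Real.log (k x) ∂P ≤ 0 := by
    have h1 : ∫ x, Real.log (k x) ∂P ≤ ∫ x, (k x - 1) ∂P := by
      apply integral_mono_ae hlog_int (hk_int.sub (integrable_const 1))
      filter_upwards [hkpos] with x hx
      exact Real.log_le_sub_one_of_pos hx
    have h2 : ∫ x, (k x - 1) ∂P = (∫ x, k x ∂P) - 1 := by
      rw [integral_sub hk_int (integrable_const 1)]
      simp
    linarith
  -- conclude
  have hsplit : ∫ x, Real.log (k x) ∂P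
      = ∫ x, g x ∂P - Real.log Z - ∫ x, Real.log (P.rnDeriv Q x).toReal ∂P := by
    rw [integral_congr_ae hlogk,
      integral_sub (f := fun x => g x - Real.log Z) (hgP.sub (integrable_const _)) hInt,
      integral_sub (f := fun x => g x) hgP (integrable_const _)]
    simp
  linarith [hsplit ▸ hmain]
lemma iadd5 {μ : Measure ℝ} {f0 f1 f2 f3 f4 : ℝ → ℝ}
    (h0 : Integrable f0 μ) (h1 : Integrable f1 μ) (h2 : Integrable f2 μ)
    (h3 : Integrable f3 μ) (h4 : Integrable f4 μ) :
    ∫ x, (f0 x + f1 x + f2 x + f3 x + f4 x) ∂μ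
      = (∫ x, f0 x ∂μ) + (∫ x, f1 x ∂μ) + (∫ x, f2 x ∂μ)
        + (∫ x, f3 x ∂μ) + (∫ x, f4 x ∂μ) := by
  rw [integral_add (f := fun x => f0 x + f1 x + f2 x + f3 x) (g := f4)
      (((h0.add h1).add h2).add h3) h4,
    integral_add (f := fun x => f0 x + f1 x + f2 x) (g := f3) ((h0.add h1).add h2) h3,
    integral_add (f := fun x => f0 x + f1 x) (g := f2) (h0.add h1) h2,
    integral_add h0 h1]

lemma iiadd4 {f0 f1 f2 f3 : ℝ → ℝ} {a b : ℝ}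
    (h0 : IntervalIntegrable f0 MeasureTheory.volume a b)
    (h1 : IntervalIntegrable f1 MeasureTheory.volume a b)
    (h2 : IntervalIntegrable f2 MeasureTheory.volume a b)
    (h3 : IntervalIntegrable f3 MeasureTheory.volume a b) :
    ∫ x in a..b, (f0 x + f1 x + f2 x + f3 x)
      = (∫ x in a..b, f0 x) + (∫ x in a..b, f1 x) + (∫ x in a..b, f2 x)
        + (∫ x in a..b, f3 x) := by
  rw [intervalIntegral.integral_add (f := fun x => f0 x + f1 x + f2 x) (g := f3)
      ((h0.add h1).add h2) h3,
    intervalIntegral.integral_add (f := fun x => f0 x + f1 x) (g := f2) (h0.add h1) h2,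
    intervalIntegral.integral_add h0 h1]

noncomputable def Wf (x : ℝ) : ℝ := -x^2 + 4*x - 2

-- the residual polynomial inequality
lemma residual_nonpos {s t : ℝ} (h0 : 0 ≤ s) (h4 : s ≤ 1/4)
    (ht1 : (0.0024787521:ℝ) < t) (ht2 : t < 0.0024787522) :
    s^3*((-80:ℝ) + 30320*t)/6 + s^4*((4752:ℝ) - 1893648*t)/24
      + s^5*((-440192:ℝ) + 177353984*t)/120
      + (7/4320)*s^6*((59245120:ℝ) - 23898546496*t) ≤ 0 := by
  have hA3 : (-80:ℝ) + 30320*t ≤ -4.844 := by nlinarith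
  have hA4 : (4752:ℝ) - 1893648*t ≤ 58.2 := by nlinarith
  have hA5 : (-440192:ℝ) + 177353984*t ≤ -575.4 := by nlinarith
  have hA6u : (59245120:ℝ) - 23898546496*t ≤ 6548 := by nlinarith
  have hA6l : (0:ℝ) ≤ (59245120:ℝ) - 23898546496*t := by nlinarith
  have hs3 : (0:ℝ) ≤ s^3 := by positivity
  have hs5 : (0:ℝ) ≤ s^5 := by positivity
  have h1 : s^3*((-80:ℝ) + 30320*t)/6 + s^4*((4752:ℝ) - 1893648*t)/24 ≤ 0 := by
    have hc : ((-80:ℝ) + 30320*t)/6 + s*((4752:ℝ) - 1893648*t)/24 ≤ 0 := by nlinarith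
    calc s^3*((-80:ℝ) + 30320*t)/6 + s^4*((4752:ℝ) - 1893648*t)/24
        = s^3 * (((-80:ℝ) + 30320*t)/6 + s*((4752:ℝ) - 1893648*t)/24) := by ring
      _ ≤ 0 := mul_nonpos_of_nonneg_of_nonpos hs3 hc
  have h2 : s^5*((-440192:ℝ) + 177353984*t)/120
      + (7/4320)*s^6*((59245120:ℝ) - 23898546496*t) ≤ 0 := by
    have hc : ((-440192:ℝ) + 177353984*t)/120
        + (7/4320)*s*((59245120:ℝ) - 23898546496*t) ≤ 0 := by nlinarith
    calc s^5*((-440192:ℝ) + 177353984*t)/120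
        + (7/4320)*s^6*((59245120:ℝ) - 23898546496*t)
        = s^5 * (((-440192:ℝ) + 177353984*t)/120
            + (7/4320)*s*((59245120:ℝ) - 23898546496*t)) := by ring
      _ ≤ 0 := mul_nonpos_of_nonneg_of_nonpos hs5 hc
  linarith

lemma Wf_le_two (x : ℝ) : Wf x ≤ 2 := by unfold Wf; nlinarith [sq_nonneg (x-2)]

lemma Z_le {s : ℝ} (h0 : 0 ≤ s) (h4 : s ≤ 1/4) :
    ∫ x, exp (s * Wf x) ∂(expMeasure 1) ≤ exp (2*s^2) := by
  rw [integral_expMeasure]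
  -- pointwise bound
  set G : ℝ → ℝ := fun x => (1 + s*Wf x + s^2*(Wf x)^2/2)
    + (Ioc (0:ℝ) 6).indicator (fun x => s^3*(Wf x)^3/6 + s^4*(Wf x)^4/24
        + s^5*(Wf x)^5/120 + (7/4320)*s^6*(Wf x)^6) x with hG
  have hpt : ∀ x ∈ Ioi (0:ℝ), exp (s * Wf x) * exp (-x) ≤ G x * exp (-x) := by
    intro x hx
    have hex : (0:ℝ) < exp (-x) := exp_pos _
    apply mul_le_mul_of_nonneg_right _ hex.le
    rcases le_or_gt x 6 with h6 | h6
    · have hmem : x ∈ Ioc (0:ℝ) 6 := ⟨hx, h6⟩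
      have hu : s * Wf x ≤ 1/2 := by
        have := Wf_le_two x
        nlinarith
      have := exp_le_P5K hu
      rw [hG]
      simp only [indicator_of_mem hmem]
      nlinarith [this]
    · have hW : Wf x ≤ -14 := by unfold Wf; nlinarith
      have hu : s * Wf x ≤ 0 := mul_nonpos_of_nonneg_of_nonpos h0 (by linarith)
      have := exp_le_quad hu
      rw [hG]
      have hnot : x ∉ Ioc (0:ℝ) 6 := fun hm => (not_le.mpr h6) hm.2
      simp only [indicator_of_notMem hnot]
      linarith [this]
  -- integrability of LHS
  have hWcont : Continuous Wf := by unfold Wf; fun_prop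
  have hfint : IntegrableOn (fun x => exp (s*Wf x) * exp (-x)) (Ioi (0:ℝ)) := by
    apply Integrable.mono' (g := fun x => exp (1/2) * (x^0 * exp (-x)))
      ((integrableOn_moment 0).const_mul _)
    · exact ((continuous_exp.comp (continuous_const.mul hWcont)).mul
        (continuous_exp.comp continuous_neg)).aestronglyMeasurable
    · apply Filter.Eventually.of_forall
      intro x
      rw [Real.norm_eq_abs, abs_of_nonneg (by positivity)]
      have hu : s * Wf x ≤ 1/2 := by nlinarith [Wf_le_two x]
      have := exp_le_exp.mpr hu
      simp only [pow_zero, one_mul]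
      nlinarith [exp_pos (-x), exp_pos (s * Wf x)]
  -- integrability of RHS parts
  have hP1 : IntegrableOn (fun x => (1 + s*Wf x + s^2*(Wf x)^2/2) * exp (-x)) (Ioi (0:ℝ)) := by
    have heq : (fun x => (1 + s*Wf x + s^2*(Wf x)^2/2) * exp (-x))
        = fun x => (1-2*s+2*s^2)*(x^0*exp (-x)) + (4*s-8*s^2)*(x^1*exp (-x))
          + (-s+10*s^2)*(x^2*exp (-x)) + (-4*s^2)*(x^3*exp (-x)) + (s^2/2)*(x^4*exp (-x)) := by
      funext x; unfold Wf; ring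
    rw [heq]
    exact (((((integrableOn_moment 0).const_mul _).add
      ((integrableOn_moment 1).const_mul _)).add
      ((integrableOn_moment 2).const_mul _)).add
      ((integrableOn_moment 3).const_mul _)).add
      ((integrableOn_moment 4).const_mul _)
  have hind_eq : (fun x => ((Ioc (0:ℝ) 6).indicator (fun x => s^3*(Wf x)^3/6 + s^4*(Wf x)^4/24
        + s^5*(Wf x)^5/120 + (7/4320)*s^6*(Wf x)^6) x) * exp (-x))
      = (Ioc (0:ℝ) 6).indicator (fun x => (s^3*(Wf x)^3/6 + s^4*(Wf x)^4/24
        + s^5*(Wf x)^5/120 + (7/4320)*s^6*(Wf x)^6) * exp (-x)) := by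
    funext x
    by_cases hx : x ∈ Ioc (0:ℝ) 6
    · simp [indicator_of_mem hx]
    · simp [indicator_of_notMem hx]
  have hP2 : IntegrableOn ((Ioc (0:ℝ) 6).indicator (fun x => (s^3*(Wf x)^3/6 + s^4*(Wf x)^4/24
        + s^5*(Wf x)^5/120 + (7/4320)*s^6*(Wf x)^6) * exp (-x))) (Ioi (0:ℝ)) := by
    have hcont : Continuous (fun x : ℝ => (s^3*(Wf x)^3/6 + s^4*(Wf x)^4/24
        + s^5*(Wf x)^5/120 + (7/4320)*s^6*(Wf x)^6) * exp (-x)) := by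
      unfold Wf; fun_prop
    exact (hcont.integrableOn_Ioc.integrable_indicator measurableSet_Ioc).integrableOn
  have hgint : IntegrableOn (fun x => G x * exp (-x)) (Ioi (0:ℝ)) := by
    have : (fun x => G x * exp (-x)) = (fun x => (1 + s*Wf x + s^2*(Wf x)^2/2) * exp (-x))
        + (Ioc (0:ℝ) 6).indicator (fun x => (s^3*(Wf x)^3/6 + s^4*(Wf x)^4/24
          + s^5*(Wf x)^5/120 + (7/4320)*s^6*(Wf x)^6) * exp (-x)) := by
      funext x
      rw [hG]
      simp only [Pi.add_apply, ← hind_eq]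
      ring
    rw [this]
    exact hP1.add hP2
  -- monotonicity
  have hmono := setIntegral_mono_on hfint hgint measurableSet_Ioi hpt
  -- compute RHS integral
  have hsplit : ∫ x in Ioi (0:ℝ), G x * exp (-x)
      = (∫ x in Ioi (0:ℝ), (1 + s*Wf x + s^2*(Wf x)^2/2) * exp (-x))
        + ∫ x in Ioi (0:ℝ), (Ioc (0:ℝ) 6).indicator (fun x => (s^3*(Wf x)^3/6 + s^4*(Wf x)^4/24
          + s^5*(Wf x)^5/120 + (7/4320)*s^6*(Wf x)^6) * exp (-x)) x := by
    rw [← integral_add hP1 hP2]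
    apply setIntegral_congr_fun measurableSet_Ioi
    intro x _
    rw [hG]
    simp only [Pi.add_apply, ← hind_eq]
    ring
  have hval1 : ∫ x in Ioi (0:ℝ), (1 + s*Wf x + s^2*(Wf x)^2/2) * exp (-x) = 1 + 2*s^2 := by
    have heq : (fun x => (1 + s*Wf x + s^2*(Wf x)^2/2) * exp (-x))
        = fun x => (1-2*s+2*s^2)*(x^0*exp (-x)) + (4*s-8*s^2)*(x^1*exp (-x))
          + (-s+10*s^2)*(x^2*exp (-x)) + (-4*s^2)*(x^3*exp (-x)) + (s^2/2)*(x^4*exp (-x)) := by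
      funext x; unfold Wf; ring
    rw [heq]
    rw [iadd5 ((integrableOn_moment 0).const_mul _) ((integrableOn_moment 1).const_mul _)
      ((integrableOn_moment 2).const_mul _) ((integrableOn_moment 3).const_mul _)
      ((integrableOn_moment 4).const_mul _)]
    simp_rw [integral_const_mul, moment_exp]
    norm_num [Nat.factorial]
    ring
  have hval2 : ∫ x in Ioi (0:ℝ), (Ioc (0:ℝ) 6).indicator (fun x => (s^3*(Wf x)^3/6 + s^4*(Wf x)^4/24
          + s^5*(Wf x)^5/120 + (7/4320)*s^6*(Wf x)^6) * exp (-x)) x ≤ 0 := by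
    rw [setIntegral_indicator measurableSet_Ioc]
    rw [inter_eq_right.mpr Ioc_subset_Ioi_self]
    have h06 : (0:ℝ) ≤ 6 := by norm_num
    rw [← intervalIntegral.integral_of_le h06]
    have hii : ∀ k : ℕ, IntervalIntegrable (fun x => (-x^2+4*x-2)^k * exp (-x))
        MeasureTheory.volume 0 6 := by
      intro k; apply Continuous.intervalIntegrable; fun_prop
    have heq2 : (fun x => (s^3*(Wf x)^3/6 + s^4*(Wf x)^4/24
          + s^5*(Wf x)^5/120 + (7/4320)*s^6*(Wf x)^6) * exp (-x))
        = fun x => (s^3/6)*((-x^2+4*x-2)^3 * exp (-x)) + (s^4/24)*((-x^2+4*x-2)^4 * exp (-x))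
          + (s^5/120)*((-x^2+4*x-2)^5 * exp (-x)) + ((7/4320)*s^6)*((-x^2+4*x-2)^6 * exp (-x)) := by
      funext x; unfold Wf; ring
    rw [heq2]
    rw [iiadd4 ((hii 3).const_mul _) ((hii 4).const_mul _) ((hii 5).const_mul _)
      ((hii 6).const_mul _)]
    simp_rw [intervalIntegral.integral_const_mul]
    rw [intA3, intA4, intA5, intA6]
    have := residual_nonpos h0 h4 exp_neg_six_gt exp_neg_six_lt
    nlinarith [this]
  have hfinal : 1 + 2*s^2 ≤ exp (2*s^2) := by
    linarith [Real.add_one_le_exp (2*s^2)]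
  linarith [hmono, hsplit ▸ hmono]

lemma integrable_exp_sW {s : ℝ} (h0 : 0 ≤ s) (h4 : s ≤ 1/4) :
    Integrable (fun x => exp (s * Wf x)) (expMeasure 1) := by
  rw [integrable_expMeasure_iff]
  have hWcont : Continuous Wf := by unfold Wf; fun_prop
  apply Integrable.mono' (g := fun x => exp (1/2) * (x^0 * exp (-x)))
    ((integrableOn_moment 0).const_mul _)
  · exact ((continuous_exp.comp (continuous_const.mul hWcont)).mul
      (continuous_exp.comp continuous_neg)).aestronglyMeasurable
  · apply Filter.Eventually.of_forall
    intro x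
    rw [Real.norm_eq_abs, abs_of_nonneg (by positivity)]
    have hu : s * Wf x ≤ 1/2 := by nlinarith [Wf_le_two x]
    have := exp_le_exp.mpr hu
    simp only [pow_zero, one_mul]
    nlinarith [exp_pos (-x), exp_pos (s * Wf x)]


/- Kullback-Leibler divergence `D(P‖Q)`: equal to `∫ log(dP/dQ) dP` when `P ≪ Q` and the
integrand is `P`-integrable, and `+∞` otherwise. -/
open Classical in
noncomputable def klDiv {Ω : Type*} [MeasurableSpace Ω] (P Q : Measure Ω) : EReal :=
  if P ≪ Q ∧ Integrable (fun ω => Real.log (P.rnDeriv Q ω).toReal) P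
  then ((∫ ω, Real.log (P.rnDeriv Q ω).toReal ∂P : ℝ) : EReal)
  else ⊤

theorem stmt_17
    (P : Measure ℝ) [IsProbabilityMeasure P] (hsupp : P (Set.Iic 0) = 0)
    (hint : Integrable (fun x => x ^ 2) P)
    (hmean : ∫ x, x ∂P = 1) (hvar : variance id P ≤ 1) :
    (((variance id P - 1) ^ 2 / 8 : ℝ) : EReal) ≤ klDiv P (expMeasure 1) := by
  haveI hQprob : IsProbabilityMeasure (expMeasure 1) :=
    isProbabilityMeasure_expMeasure one_pos
  unfold klDiv
  split_ifs with h
  swap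
  · exact le_top
  obtain ⟨hac, hInt⟩ := h
  rw [EReal.coe_le_coe_iff]
  set v := variance id P with hv
  have hv0 : 0 ≤ v := variance_nonneg _ _
  have hmem : MemLp id 2 P := by
    rw [memLp_two_iff_integrable_sq aestronglyMeasurable_id]
    simpa using hint
  have hx2 : ∫ x, x^2 ∂P = v + 1 := by
    have hd := variance_eq_sub hmem
    simp only [Pi.pow_apply, id_eq] at hd
    rw [hmean] at hd
    rw [hv, hd]
    ring
  have hxint : Integrable (fun x : ℝ => x) P := by
    apply Integrable.mono' (g := fun x => x^2 + 1) (hint.add (integrable_const 1))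
      aestronglyMeasurable_id
    apply Filter.Eventually.of_forall
    intro x
    simp only [id_eq, Real.norm_eq_abs]
    rcases abs_cases x with ⟨he, _⟩ | ⟨he, _⟩ <;> rw [he] <;>
      nlinarith [sq_nonneg (x+1), sq_nonneg (x-1)]
  set s : ℝ := (1 - v)/4 with hs
  have hs0 : 0 ≤ s := by rw [hs]; linarith
  have hs4 : s ≤ 1/4 := by rw [hs]; linarith
  have hWint : Integrable (fun x => s * Wf x) P := by
    have h1 : Integrable (fun x : ℝ => -(x^2) + 4*x + -2) P :=
      (hint.neg.add (hxint.const_mul 4)).add (integrable_const (-2))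
    have : (fun x => s * Wf x) = fun x => s * (-(x^2) + 4*x + -2) := by
      funext x; unfold Wf; ring
    rw [this]
    exact h1.const_mul s
  have hWmeas : Measurable (fun x => s * Wf x) := by
    unfold Wf; fun_prop
  have hexpQ : Integrable (fun x => exp (s * Wf x)) (expMeasure 1) :=
    integrable_exp_sW hs0 hs4
  have hDV := DV hac hInt hWmeas hWint hexpQ
  have hZpos : 0 < ∫ x, exp (s * Wf x) ∂(expMeasure 1) := integral_exp_pos hexpQ
  have hlogZ : Real.log (∫ x, exp (s * Wf x) ∂(expMeasure 1)) ≤ 2*s^2 := by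
    calc Real.log (∫ x, exp (s * Wf x) ∂(expMeasure 1))
        ≤ Real.log (exp (2*s^2)) := Real.log_le_log hZpos (Z_le hs0 hs4)
      _ = 2*s^2 := Real.log_exp _
  have hEW : ∫ x, s * Wf x ∂P = s * (1 - v) := by
    rw [integral_const_mul]
    have h1 : Integrable (fun x : ℝ => -(x^2) + 4*x) P := hint.neg.add (hxint.const_mul 4)
    have heq : (fun x : ℝ => Wf x) = fun x => (-(x^2) + 4*x) + -2 := by
      funext x; unfold Wf; ring
    rw [heq, integral_add h1 (integrable_const (-2)),
      integral_add (f := fun x : ℝ => -(x^2)) hint.neg (hxint.const_mul 4),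
      integral_neg, integral_const_mul]
    simp only [integral_const, measure_univ, ENNReal.toReal_one, smul_eq_mul, probReal_univ]
    rw [hx2, hmean]
    ring
  rw [hEW] at hDV
  have : s * (1 - v) - 2*s^2 = (v-1)^2/8 := by rw [hs]; ring
  linarith [hDV, hlogZ]
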